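/- In the dynamic network creation game in which players' communication cost uses the temporal shortest distance, for every real atomic cost α > 0 and every integer d ≥ 1, any strategy profile on the 2^d players {0,1}^d in which every edge of the labelled hypercube Q_d is bought, with its time label, by exactly one of its two endpoints, and in which strategies contain nothing else, has social cost exactly α·d·2^{d−1} + d·2^{2d−1}. -/

import Mathlib

open scoped ENNReal BigOperators

/-- A temporal path from `u` to `v`, given as a list of steps `(next vertex, time label)`.
The labelling `lab` gives, for each (ordered) pair of vertices, the set of time labels of the
edge joining them (empty if there is no edge); it is symmetric for temporal graphs arising
from strategy profiles.  The conditions say that consecutive steps use time labels belonging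
to the corresponding edge, that time labels strictly increase along the path, that no vertex is
repeated, and that the path ends at `v`. -/
def IsTemporalPath {V : Type*} (lab : V → V → Set ℕ) (u v : V) (p : List (V × ℕ)) : Prop :=
  List.Chain (fun a b => b.2 ∈ lab a.1 b.1) (u, 0) p ∧
  List.Chain' (· < ·) (p.map Prod.snd) ∧
  (u :: p.map Prod.fst).Nodup ∧
  (u :: p.map Prod.fst).getLast (List.cons_ne_nil _ _) = v

/-- The temporal shortest distance from `u` to `v`: the least number of edges of a temporal
path from `u` to `v` (`0` if `u = v`, `⊤` if there is no temporal path). -/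
noncomputable def temporalDist {V : Type*} (lab : V → V → Set ℕ) (u v : V) : ℕ∞ :=
  sInf {n : ℕ∞ | ∃ p : List (V × ℕ), IsTemporalPath lab u v p ∧ (p.length : ℕ∞) = n}

/-- The labelling of the communication temporal graph `𝒢[s]` of a strategy profile `s`:
`t` is a label of the edge `uv` iff `(u, t) ∈ s v` or `(v, t) ∈ s u`. -/
def profLab {V : Type*} (s : V → Finset (V × ℕ)) : V → V → Set ℕ :=
  fun u v => {t | (u, t) ∈ s v ∨ (v, t) ∈ s u}

/-- The (finite) set of time labels of the edge `uv` in the communication temporal graph. -/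
def labelFinset {V : Type*} [DecidableEq V] (s : V → Finset (V × ℕ)) (u v : V) : Finset ℕ :=
  (((s v).filter (fun p => p.1 = u)).image Prod.snd) ∪
    (((s u).filter (fun p => p.1 = v)).image Prod.snd)

/-- The total number of time labels `∑ e ∈ E, |λ(e)|` of the communication temporal graph
(each unordered pair is counted once, whence the division by `2`). -/
def numLabels {V : Type*} [Fintype V] [DecidableEq V] (s : V → Finset (V × ℕ)) : ℕ :=
  (∑ u : V, ∑ v : V, if u = v then 0 else (labelFinset s u v).card) / 2

/-- The number of edges `|E|` of the communication temporal graph. -/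
def numEdges {V : Type*} [Fintype V] [DecidableEq V] (s : V → Finset (V × ℕ)) : ℕ :=
  ((Finset.univ : Finset (V × V)).filter
    (fun q => q.1 ≠ q.2 ∧ (labelFinset s q.1 q.2).Nonempty)).card / 2

/-- The social cost `c[s] = α·∑_{e ∈ E} |λ(e)| + ∑_{(u,v) ∈ V×V} d_{𝒢[s]}(u,v)`
of a strategy profile `s` for atomic cost `α`. -/
noncomputable def socialCost {V : Type*} [Fintype V] [DecidableEq V]
    (α : ℝ) (s : V → Finset (V × ℕ)) : ℝ≥0∞ :=
  ENNReal.ofReal α * (numLabels s : ℝ≥0∞) +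
    ∑ u : V, ∑ v : V, (temporalDist (profLab s) u v : ℝ≥0∞)

/-- The individual cost `c[s](v) = α·|s(v)| + ∑_{w ∈ V} d_{𝒢[s]}(v,w)` of player `v`. -/
noncomputable def indivCost {V : Type*} [Fintype V]
    (α : ℝ) (s : V → Finset (V × ℕ)) (v : V) : ℝ≥0∞ :=
  ENNReal.ofReal α * ((s v).card : ℝ≥0∞) +
    ∑ w : V, (temporalDist (profLab s) v w : ℝ≥0∞)

/-- A strategy profile is a Nash equilibrium if no player can strictly decrease its individual
cost by changing only its own strategy. -/
def IsNash {V : Type*} [Fintype V] [DecidableEq V] (α : ℝ) (s : V → Finset (V × ℕ)) : Prop :=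
  ∀ (v : V) (t : Finset (V × ℕ)),
    ¬ indivCost α (Function.update s v t) v < indivCost α s v

/-- The optimal social cost `c*(α, n)`: the minimum social cost over all strategy profiles
with `n` players and atomic cost `α`. -/
noncomputable def optCost (α : ℝ) (n : ℕ) : ℝ≥0∞ :=
  ⨅ s : Fin n → Finset (Fin n × ℕ), socialCost α s

/-- The price of anarchy `PoA(α, n)`: the maximum social cost of a Nash equilibrium with `n`
players and atomic cost `α`, divided by the optimal social cost `c*(α, n)`. -/
noncomputable def PoA (α : ℝ) (n : ℕ) : ℝ≥0∞ :=
  (⨆ s : {s : Fin n → Finset (Fin n × ℕ) // IsNash α s}, socialCost α s.1) / optCost α n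

/-- The price of stability `PoS(α, n)`: the minimum social cost of a Nash equilibrium with `n`
players and atomic cost `α`, divided by the optimal social cost `c*(α, n)`. -/
noncomputable def PoS (α : ℝ) (n : ℕ) : ℝ≥0∞ :=
  (⨅ s : {s : Fin n → Finset (Fin n × ℕ) // IsNash α s}, socialCost α s.1) / optCost α n

/-- The labelling of the hypercube `Q_d`: vertices are elements of `{0,1}^d`, two vertices
are joined by an edge iff they differ in exactly one coordinate, and the edge whose
endpoints differ in coordinate `i` (for `0 ≤ i < d`) carries the single time label `i + 1`. -/
def QLab (d : ℕ) : (Fin d → Bool) → (Fin d → Bool) → Set ℕ := fun u v =>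
  {t | ∃ i : Fin d, t = (i : ℕ) + 1 ∧ u i ≠ v i ∧ ∀ j : Fin d, j ≠ i → u j = v j}

section Aux

variable {d : ℕ}

/-- Flip coordinate `i`. -/
def bflip (d : ℕ) (u : Fin d → Bool) (i : Fin d) : Fin d → Bool :=
  Function.update u i (!u i)

lemma bflip_self (u : Fin d → Bool) (i : Fin d) : bflip d u i i = !u i :=
  Function.update_self _ _ _

lemma bflip_ne (u : Fin d → Bool) {i j : Fin d} (h : j ≠ i) : bflip d u i j = u j :=
  Function.update_of_ne h _ _

lemma mem_qlab_flip (u : Fin d → Bool) (i : Fin d) :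
    (i : ℕ) + 1 ∈ QLab d u (bflip d u i) := by
  refine ⟨i, rfl, ?_, fun j hj => (bflip_ne u hj).symm⟩
  rw [bflip_self]
  simp

end Aux

section Path

variable {d : ℕ}

def mkPath (d : ℕ) : (Fin d → Bool) → List (Fin d) → List ((Fin d → Bool) × ℕ)
  | _, [] => []
  | u, i :: l => (bflip d u i, (i : ℕ) + 1) :: mkPath d (bflip d u i) l

lemma mkPath_length (u : Fin d → Bool) (l : List (Fin d)) :
    (mkPath d u l).length = l.length := by
  induction l generalizing u with
  | nil => rfl
  | cons i l ih => simp [mkPath, ih]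

lemma mkPath_snd (u : Fin d → Bool) (l : List (Fin d)) :
    (mkPath d u l).map Prod.snd = l.map (fun i : Fin d => (i : ℕ) + 1) := by
  induction l generalizing u with
  | nil => rfl
  | cons i l ih => simp [mkPath, ih]

lemma mkPath_chain (u : Fin d → Bool) (l : List (Fin d)) (t : ℕ) :
    List.Chain (fun a b => b.2 ∈ QLab d a.1 b.1) (u, t) (mkPath d u l) := by
  induction l generalizing u t with
  | nil => exact List.Chain.nil
  | cons i l ih => exact List.Chain.cons (mem_qlab_flip u i) (ih _ _)

lemma mkPath_coord (u : Fin d → Bool) (l : List (Fin d)) {i : Fin d} (hi : i ∉ l) :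
    ∀ x ∈ (mkPath d u l).map Prod.fst, x i = u i := by
  induction l generalizing u with
  | nil => simp [mkPath]
  | cons j l ih =>
    intro x hx
    simp only [mkPath, List.map_cons, List.mem_cons] at hx
    have hij : i ≠ j := fun h => hi (h ▸ List.mem_cons_self (a := j) (l := l))
    rcases hx with rfl | hx
    · exact bflip_ne u hij
    · rw [ih (bflip d u j) (fun h => hi (List.mem_cons_of_mem _ h)) x hx]
      exact bflip_ne u hij

lemma mkPath_nodup (u : Fin d → Bool) (l : List (Fin d)) (hl : l.Nodup) :
    (u :: (mkPath d u l).map Prod.fst).Nodup := by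
  induction l generalizing u with
  | nil => simp [mkPath]
  | cons i l ih =>
    rw [List.nodup_cons] at hl
    have h2 := ih (bflip d u i) hl.2
    simp only [mkPath, List.map_cons]
    refine List.nodup_cons.2 ⟨?_, h2⟩
    intro hu
    have : u i = !u i := by
      rcases List.mem_cons.1 hu with h | h
      · conv_lhs => rw [h]
        exact bflip_self u i
      · have := mkPath_coord (bflip d u i) l hl.1 u h
        conv_lhs => rw [this]
        exact bflip_self u i
    simp at this

lemma mkPath_getLast (u : Fin d → Bool) (l : List (Fin d)) :
    (u :: (mkPath d u l).map Prod.fst).getLast (List.cons_ne_nil _ _) =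
      l.foldl (bflip d) u := by
  induction l generalizing u with
  | nil => rfl
  | cons i l ih =>
    simp only [mkPath, List.map_cons, List.foldl_cons]
    rw [List.getLast_cons (List.cons_ne_nil _ _)]
    exact ih (bflip d u i)

lemma foldl_bflip_apply (u : Fin d → Bool) (l : List (Fin d)) (hl : l.Nodup) (j : Fin d) :
    l.foldl (bflip d) u j = if j ∈ l then !u j else u j := by
  induction l generalizing u with
  | nil => simp
  | cons i l ih =>
    rw [List.nodup_cons] at hl
    rw [List.foldl_cons, ih _ hl.2]
    by_cases hji : j = i
    · subst hji
      simp [hl.1, bflip_self]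
    · simp [bflip_ne u hji, hji, List.mem_cons]

end Path

section Dist

open Finset

variable {d : ℕ}

/-- the sorted list of differing coordinates -/
noncomputable def diffList (u v : Fin d → Bool) : List (Fin d) :=
  (Finset.univ.filter fun i => u i ≠ v i).sort (· ≤ ·)

lemma diffList_nodup (u v : Fin d → Bool) : (diffList u v).Nodup :=
  Finset.sort_nodup _ _

lemma mem_diffList {u v : Fin d → Bool} {i : Fin d} : i ∈ diffList u v ↔ u i ≠ v i := by
  simp [diffList, Finset.mem_sort]

lemma diffList_length (u v : Fin d → Bool) : (diffList u v).length = hammingDist u v := by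
  simp [diffList, hammingDist, Finset.length_sort]

lemma diffList_chain (u v : Fin d → Bool) :
    ((diffList u v).map (fun i : Fin d => (i : ℕ) + 1)).Chain' (· < ·) := by
  have hs : (diffList u v).Pairwise (· < ·) := (Finset.sortedLT_sort _).pairwise
  refine List.Pairwise.isChain ?_
  exact hs.map _ (fun a b h => by
    have : (a : ℕ) < b := h
    omega)

lemma foldl_diffList (u v : Fin d → Bool) : (diffList u v).foldl (bflip d) u = v := by
  funext j
  rw [foldl_bflip_apply u _ (diffList_nodup u v) j]
  by_cases h : u j = v j
  · simp [mem_diffList, h]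
  · have : j ∈ diffList u v := mem_diffList.2 h
    simp only [this, if_true]
    revert h
    cases u j <;> cases v j <;> simp

lemma mkPath_isTemporalPath (u v : Fin d → Bool) :
    IsTemporalPath (QLab d) u v (mkPath d u (diffList u v)) := by
  refine ⟨mkPath_chain u _ 0, ?_, mkPath_nodup u _ (diffList_nodup u v), ?_⟩
  · rw [mkPath_snd]
    exact diffList_chain u v
  · rw [mkPath_getLast]
    exact foldl_diffList u v

lemma hammingDist_le_of_chain (p : List ((Fin d → Bool) × ℕ)) :
    ∀ (u : (Fin d → Bool)) (t : ℕ),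
      List.Chain (fun a b => b.2 ∈ QLab d a.1 b.1) (u, t) p →
      ∀ v, (u :: p.map Prod.fst).getLast (List.cons_ne_nil _ _) = v →
      hammingDist u v ≤ p.length := by
  induction p with
  | nil =>
    intro u t _ v hv
    simp only [List.map_nil, List.getLast_singleton] at hv
    subst hv
    simp
  | cons a p ih =>
    intro u t hc v hv
    obtain ⟨hstep, hchain⟩ := List.chain_cons.1 hc
    obtain ⟨i, _, hne, heq⟩ := hstep
    have h1 : hammingDist u a.1 ≤ 1 := by
      rw [hammingDist]
      refine le_trans (Finset.card_le_card (fun j hj => ?_)) (by simp : ({i} : Finset (Fin d)).card ≤ 1)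
      simp only [Finset.mem_filter, Finset.mem_univ, true_and] at hj
      simp only [Finset.mem_singleton]
      by_contra hji
      exact hj (heq j hji)
    have hv' : (a.1 :: p.map Prod.fst).getLast (List.cons_ne_nil _ _) = v := by
      rw [← hv]
      simp only [List.map_cons]
      exact (List.getLast_cons (List.cons_ne_nil _ _)).symm
    have h2 := ih a.1 a.2 hchain v hv'
    calc hammingDist u v ≤ hammingDist u a.1 + hammingDist a.1 v := hammingDist_triangle _ _ _
    _ ≤ 1 + p.length := by omega
    _ = (a :: p).length := by simp [add_comm]

lemma temporalDist_qlab (u v : Fin d → Bool) :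
    temporalDist (QLab d) u v = (hammingDist u v : ℕ∞) := by
  apply le_antisymm
  · apply sInf_le
    exact ⟨mkPath d u (diffList u v), mkPath_isTemporalPath u v, by
      rw [mkPath_length, diffList_length]⟩
  · apply le_sInf
    rintro n ⟨p, ⟨hc, _, _, hl⟩, rfl⟩
    exact_mod_cast hammingDist_le_of_chain p u 0 hc v hl

end Dist

section Count

open Finset

variable {d : ℕ}

lemma qlab_symm (u v : Fin d → Bool) : QLab d u v = QLab d v u := by
  ext t
  constructor <;> exact fun ⟨i, h1, h2, h3⟩ => ⟨i, h1, Ne.symm h2, fun j hj => (h3 j hj).symm⟩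

lemma hamming_filter (u v : Fin d → Bool) :
    hammingDist u v = ({j | u j ≠ v j} : Finset (Fin d)).card := rfl

lemma filter_bflip (u : Fin d → Bool) (i : Fin d) :
    ({j | u j ≠ bflip d u i j} : Finset (Fin d)) = {i} := by
  ext j
  simp only [mem_filter, mem_univ, true_and, mem_singleton]
  constructor
  · intro hj
    by_contra hji
    exact hj (bflip_ne u hji).symm
  · rintro rfl
    rw [bflip_self]
    simp

lemma eq_bflip_of_filter {u v : Fin d → Bool} {i : Fin d}
    (hf : ({j | u j ≠ v j} : Finset (Fin d)) = {i}) : v = bflip d u i := by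
  funext j
  by_cases hji : j = i
  · subst hji
    have : u j ≠ v j := by
      have : j ∈ ({j | u j ≠ v j} : Finset (Fin d)) := by rw [hf]; simp
      simpa using this
    rw [bflip_self]
    revert this
    cases u j <;> cases v j <;> simp
  · rw [bflip_ne u hji]
    by_contra hne
    have : j ∈ ({i} : Finset (Fin d)) := by
      rw [← hf]; simp [Ne.symm hne]
    exact hji (by simpa using this)

lemma qlab_eq_singleton {u v : Fin d → Bool} {i : Fin d}
    (hf : ({j | u j ≠ v j} : Finset (Fin d)) = {i}) :
    QLab d u v = {(i : ℕ) + 1} := by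
  ext t
  simp only [QLab, Set.mem_setOf_eq, Set.mem_singleton_iff]
  constructor
  · rintro ⟨i', rfl, hne, _⟩
    have : i' ∈ ({i} : Finset (Fin d)) := by rw [← hf]; simp [hne]
    simp only [mem_singleton] at this
    subst this; rfl
  · rintro rfl
    have hi : u i ≠ v i := by
      have : i ∈ ({j | u j ≠ v j} : Finset (Fin d)) := by rw [hf]; simp
      simpa using this
    refine ⟨i, rfl, hi, fun j hj => ?_⟩
    by_contra hne
    have : j ∈ ({i} : Finset (Fin d)) := by rw [← hf]; simp [hne]
    exact hj (by simpa using this)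

lemma qlab_eq_empty {u v : Fin d → Bool} (h : hammingDist u v ≠ 1) : QLab d u v = ∅ := by
  ext t
  simp only [QLab, Set.mem_setOf_eq, Set.mem_empty_iff_false, iff_false]
  rintro ⟨i, rfl, hne, heq⟩
  apply h
  rw [hamming_filter]
  have : ({j | u j ≠ v j} : Finset (Fin d)) = {i} := by
    ext j
    simp only [mem_filter, mem_univ, true_and, mem_singleton]
    constructor
    · intro hj
      by_contra hji
      exact hj (heq j hji)
    · rintro rfl; exact hne
  rw [this, card_singleton]

lemma bflip_bflip (v : Fin d → Bool) (i : Fin d) : bflip d (bflip d v i) i = v := by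
  funext j
  by_cases hji : j = i
  · subst hji
    rw [bflip_self, bflip_self]
    simp
  · rw [bflip_ne _ hji, bflip_ne _ hji]

lemma card_neighbors (u : Fin d → Bool) :
    ({v | hammingDist u v = 1} : Finset (Fin d → Bool)).card = d := by
  symm
  conv_lhs => rw [← Fintype.card_fin d]
  rw [← Finset.card_univ]
  refine Finset.card_bij (fun i _ => bflip d u i) (fun i _ => ?_) (fun i _ i' _ h => ?_) ?_
  · simp only [mem_filter, mem_univ, true_and]
    rw [hamming_filter, filter_bflip, card_singleton]
  · by_contra hne
    have h2 : bflip d u i i = bflip d u i' i := congrFun h i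
    rw [bflip_self, bflip_ne u hne] at h2
    simp at h2
  · intro v hv
    simp only [mem_filter, mem_univ, true_and] at hv
    rw [hamming_filter] at hv
    obtain ⟨i, hi⟩ := Finset.card_eq_one.1 hv
    exact ⟨i, mem_univ i, (eq_bflip_of_filter hi).symm⟩

lemma card_half (u : Fin d → Bool) (hd : 1 ≤ d) (i : Fin d) :
    (Finset.univ.filter (fun v : Fin d → Bool => v i ≠ u i)).card = 2 ^ (d - 1) := by
  have key : (Finset.univ.filter (fun v : Fin d → Bool => v i ≠ u i)).card
      = (Finset.univ.filter (fun v : Fin d → Bool => v i = u i)).card := by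
    refine Finset.card_nbij' (fun v => bflip d v i) (fun v => bflip d v i) ?_ ?_
      (fun v _ => bflip_bflip v i) (fun v _ => bflip_bflip v i)
    · intro v hv
      simp only [mem_coe, mem_filter, mem_univ, true_and] at hv ⊢
      rw [bflip_self]
      revert hv
      cases v i <;> cases u i <;> simp
    · intro v hv
      simp only [mem_coe, mem_filter, mem_univ, true_and] at hv ⊢
      rw [bflip_self]
      revert hv
      cases v i <;> cases u i <;> simp
  have total : (Finset.univ.filter (fun v : Fin d → Bool => v i ≠ u i)).card
      + (Finset.univ.filter (fun v : Fin d → Bool => v i = u i)).card = 2 ^ d := by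
    have h1 : (Finset.univ.filter (fun v : Fin d → Bool => v i ≠ u i)).card
        + (Finset.univ.filter (fun v : Fin d → Bool => ¬ v i ≠ u i)).card
        = (Finset.univ : Finset (Fin d → Bool)).card :=
      Finset.card_filter_add_card_filter_not (p := fun v : Fin d → Bool => v i ≠ u i)
    have h2 : (Finset.univ.filter (fun v : Fin d → Bool => ¬ v i ≠ u i))
        = (Finset.univ.filter (fun v : Fin d → Bool => v i = u i)) := by
      ext v
      simp [not_ne_iff]
    rw [h2, Finset.card_univ, Fintype.card_fun, Fintype.card_fin, Fintype.card_bool] at h1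
    exact h1
  have hpow : 2 ^ d = 2 * 2 ^ (d - 1) := by
    have h3 : d - 1 + 1 = d := Nat.succ_pred_eq_of_pos hd
    conv_lhs => rw [← h3]
    rw [pow_succ']
  have h4 : 2 * (Finset.univ.filter (fun v : Fin d → Bool => v i ≠ u i)).card
      = 2 * 2 ^ (d - 1) := by
    rw [← hpow, ← total, key]
    ring
  exact Nat.eq_of_mul_eq_mul_left (by norm_num) h4

end Count

section Labels

open Finset

lemma mem_labelFinset {V : Type*} [DecidableEq V] (s : V → Finset (V × ℕ)) (u v : V) (t : ℕ) :
    t ∈ labelFinset s u v ↔ ((u, t) ∈ s v ∨ (v, t) ∈ s u) := by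
  simp only [labelFinset, Finset.mem_union, Finset.mem_image, Finset.mem_filter]
  constructor
  · rintro (⟨⟨a, b⟩, ⟨hp, rfl⟩, rfl⟩ | ⟨⟨a, b⟩, ⟨hp, rfl⟩, rfl⟩)
    · exact Or.inl hp
    · exact Or.inr hp
  · rintro (h | h)
    · exact Or.inl ⟨(u, t), ⟨h, rfl⟩, rfl⟩
    · exact Or.inr ⟨(v, t), ⟨h, rfl⟩, rfl⟩

variable {d : ℕ}

lemma profLab_eq (s : (Fin d → Bool) → Finset ((Fin d → Bool) × ℕ))
    (hbuy : ∀ (v w : Fin d → Bool) (t : ℕ), (w, t) ∈ s v → t ∈ QLab d v w)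
    (honce : ∀ (v w : Fin d → Bool) (t : ℕ),
      t ∈ QLab d v w → ((w, t) ∈ s v ↔ (v, t) ∉ s w)) :
    profLab s = QLab d := by
  funext u v
  ext t
  simp only [profLab, Set.mem_setOf_eq]
  constructor
  · rintro (h | h)
    · rw [qlab_symm]
      exact hbuy v u t h
    · exact hbuy u v t h
  · intro ht
    by_cases h : (v, t) ∈ s u
    · exact Or.inr h
    · refine Or.inl ((honce v u t ?_).2 h)
      rw [← qlab_symm]
      exact ht

lemma labelFinset_card (s : (Fin d → Bool) → Finset ((Fin d → Bool) × ℕ))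
    (hbuy : ∀ (v w : Fin d → Bool) (t : ℕ), (w, t) ∈ s v → t ∈ QLab d v w)
    (honce : ∀ (v w : Fin d → Bool) (t : ℕ),
      t ∈ QLab d v w → ((w, t) ∈ s v ↔ (v, t) ∉ s w))
    (u v : Fin d → Bool) :
    (labelFinset s u v).card = if hammingDist u v = 1 then 1 else 0 := by
  have hmem : ∀ t, t ∈ labelFinset s u v ↔ t ∈ QLab d u v := by
    intro t
    rw [mem_labelFinset]
    have h := congrFun (congrFun (profLab_eq s hbuy honce) u) v
    rw [← h]
    rfl
  split_ifs with h
  · rw [hamming_filter] at h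
    obtain ⟨i, hi⟩ := Finset.card_eq_one.1 h
    have hls : labelFinset s u v = {(i : ℕ) + 1} := by
      ext t
      rw [hmem, qlab_eq_singleton hi]
      simp
    rw [hls, Finset.card_singleton]
  · have hls : labelFinset s u v = ∅ := by
      ext t
      rw [hmem, qlab_eq_empty h]
      simp
    rw [hls, Finset.card_empty]

lemma numLabels_eq (hd : 1 ≤ d) (s : (Fin d → Bool) → Finset ((Fin d → Bool) × ℕ))
    (hbuy : ∀ (v w : Fin d → Bool) (t : ℕ), (w, t) ∈ s v → t ∈ QLab d v w)
    (honce : ∀ (v w : Fin d → Bool) (t : ℕ),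
      t ∈ QLab d v w → ((w, t) ∈ s v ↔ (v, t) ∉ s w)) :
    numLabels s = d * 2 ^ (d - 1) := by
  unfold numLabels
  have h2 : ∑ u : Fin d → Bool, ∑ v, (if u = v then 0 else (labelFinset s u v).card)
      = ∑ u : Fin d → Bool, ∑ v, (if hammingDist u v = 1 then 1 else 0) := by
    refine Finset.sum_congr rfl fun u _ => Finset.sum_congr rfl fun v _ => ?_
    by_cases huv : u = v
    · subst huv
      simp
    · rw [if_neg huv, labelFinset_card s hbuy honce u v]
  rw [h2]
  have h3 : ∀ u : Fin d → Bool, (∑ v, if hammingDist u v = 1 then 1 else 0) = d := by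
    intro u
    rw [← Finset.card_filter]
    exact card_neighbors u
  rw [Finset.sum_congr rfl fun u _ => h3 u, Finset.sum_const, Finset.card_univ,
    Fintype.card_fun, Fintype.card_fin, Fintype.card_bool, smul_eq_mul]
  have hpow : 2 ^ d = 2 ^ (d - 1) * 2 := by
    rw [← pow_succ]
    congr 1
    omega
  rw [hpow]
  have : 2 ^ (d - 1) * 2 * d = d * 2 ^ (d - 1) * 2 := by ring
  rw [this, Nat.mul_div_cancel _ (by norm_num)]

lemma sum_hamming (hd : 1 ≤ d) :
    ∑ u : Fin d → Bool, ∑ v : Fin d → Bool, hammingDist u v = d * 2 ^ (2 * d - 1) := by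
  have h1 : ∀ u v : Fin d → Bool,
      hammingDist u v = ∑ i : Fin d, if u i ≠ v i then 1 else 0 := fun u v => by
    rw [hamming_filter, Finset.card_filter]
  have h2 : ∀ (u : Fin d → Bool) (i : Fin d),
      (∑ v : Fin d → Bool, if u i ≠ v i then 1 else 0) = 2 ^ (d - 1) := by
    intro u i
    rw [← Finset.card_filter]
    rw [show (Finset.univ.filter fun v : Fin d → Bool => u i ≠ v i)
        = (Finset.univ.filter fun v : Fin d → Bool => v i ≠ u i) from by
      ext v; simp [ne_comm]]
    exact card_half u hd i
  calc ∑ u : Fin d → Bool, ∑ v : Fin d → Bool, hammingDist u v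
      = ∑ u : Fin d → Bool, ∑ i : Fin d, ∑ v : Fin d → Bool,
          (if u i ≠ v i then 1 else 0) := by
        refine Finset.sum_congr rfl fun u _ => ?_
        rw [← Finset.sum_comm]
        exact Finset.sum_congr rfl fun v _ => h1 u v
    _ = ∑ u : Fin d → Bool, ∑ i : Fin d, 2 ^ (d - 1) := by
        refine Finset.sum_congr rfl fun u _ => Finset.sum_congr rfl fun i _ => h2 u i
    _ = 2 ^ d * (d * 2 ^ (d - 1)) := by
        simp only [Finset.sum_const, Finset.card_univ, Fintype.card_fun,
          Fintype.card_fin, Fintype.card_bool, smul_eq_mul]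
        try ring
    _ = d * 2 ^ (2 * d - 1) := by
        rw [show 2 * d - 1 = d + (d - 1) from by omega, pow_add]
        ring

end Labels


/-- For every atomic cost `α > 0` and every integer `d ≥ 1`, any strategy profile on the
`2^d` players `{0,1}^d` in which every edge of the labelled hypercube `Q_d` is bought, with
its time label, by exactly one of its two endpoints, and in which strategies contain nothing
else, has social cost exactly `α·d·2^(d-1) + d·2^(2d-1)`. -/
theorem statement_15 (α : ℝ) (hα : 0 < α) (d : ℕ) (hd : 1 ≤ d)
    (s : (Fin d → Bool) → Finset ((Fin d → Bool) × ℕ))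
    (hbuy : ∀ (v w : Fin d → Bool) (t : ℕ), (w, t) ∈ s v → t ∈ QLab d v w)
    (honce : ∀ (v w : Fin d → Bool) (t : ℕ),
      t ∈ QLab d v w → ((w, t) ∈ s v ↔ (v, t) ∉ s w)) :
    socialCost α s =
      ENNReal.ofReal α * ((d : ℝ≥0∞) * 2 ^ (d - 1)) + (d : ℝ≥0∞) * 2 ^ (2 * d - 1) := by
  unfold socialCost
  rw [numLabels_eq hd s hbuy honce]
  congr 1
  · congr 1
    push_cast
    ring
  · have hdist : ∀ u v : Fin d → Bool,
        ((temporalDist (profLab s) u v : ℕ∞) : ℝ≥0∞)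
          = ((hammingDist u v : ℕ) : ℝ≥0∞) := by
      intro u v
      rw [profLab_eq s hbuy honce, temporalDist_qlab]
      simp
    calc ∑ u : Fin d → Bool, ∑ v : Fin d → Bool,
          ((temporalDist (profLab s) u v : ℕ∞) : ℝ≥0∞)
        = ∑ u : Fin d → Bool, ∑ v : Fin d → Bool,
          ((hammingDist u v : ℕ) : ℝ≥0∞) := by
          exact Finset.sum_congr rfl fun u _ => Finset.sum_congr rfl fun v _ => hdist u v
      _ = (((∑ u : Fin d → Bool, ∑ v : Fin d → Bool, hammingDist u v : ℕ)) : ℝ≥0∞) := by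
          push_cast
          rfl
      _ = (d : ℝ≥0∞) * 2 ^ (2 * d - 1) := by
          rw [sum_hamming hd]
          push_cast
          ring
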